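/- arXiv:1509.01165 — 4 statements merged into one kernel-verified Lean document; each statement's English description precedes it below -/
import Mathlib

section
/- Let S be a left Ore domain with division ring of fractions Q, and let C ⊆ Q be a division subring such that the left C-submodule C·S of Q generated by products c·s (c ∈ C, s ∈ S) is finite dimensional as a left C-vector space. Then C·S = Q. -/
/-- Lemma (locali1), first part: let `S` be a left Ore domain with division ring of
fractions `Q` (encoded: `Q` is a division ring, `S` a subring such that every element of
`Q` is a left fraction `g⁻¹ * f` with `f, g ∈ S`, `g ≠ 0`), and let `C ⊆ Q` be a division
subring (a subring closed under inverses).  If the left `C`-span `C·S` of `S` in `Q` is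
finite dimensional over `C`, then `C·S = Q`. -/
theorem stmt0 (Q : Type*) [DivisionRing Q] (S C : Subring Q)
    (hdom : ∀ a b : Q, a ∈ S → b ∈ S → a * b = 0 → a = 0 ∨ b = 0)
    (hfrac : ∀ q : Q, ∃ f ∈ S, ∃ g ∈ S, g ≠ 0 ∧ q = g⁻¹ * f)
    (hC : ∀ c ∈ C, c⁻¹ ∈ C)
    (hfin : Module.Finite C (Submodule.span C (S : Set Q))) :
    Submodule.span C (S : Set Q) = ⊤ := by
  set V := Submodule.span C (S : Set Q) with hVdef
  -- right multiplication by an element of S preserves V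
  have hmul : ∀ s ∈ S, ∀ v ∈ V, v * s ∈ V := by
    intro s hs v hv
    induction hv using Submodule.span_induction with
    | mem x hx => exact Submodule.subset_span (S.mul_mem hx hs)
    | zero => simpa using V.zero_mem
    | add x y _ _ hx hy => simpa [add_mul] using V.add_mem hx hy
    | smul c x _ hx =>
        have : (c • x) * s = c • (x * s) := by
          show ((c : Q) * x) * s = (c : Q) * (x * s)
          rw [mul_assoc]
        rw [this]; exact V.smul_mem c hx
  -- C is a division ring
  letI : DivisionRing C :=
    { (inferInstance : Ring C) with
      inv := fun c => ⟨(c : Q)⁻¹, hC c c.2⟩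
      mul_inv_cancel := by
        intro a ha
        apply Subtype.ext
        exact mul_inv_cancel₀ (fun h => ha (Subtype.ext h))
      inv_zero := Subtype.ext inv_zero
      qsmul := _
      nnqsmul := _ }
  haveI : FiniteDimensional C V := hfin
  -- inverses of nonzero elements of S lie in V
  have hinv : ∀ s ∈ S, s ≠ 0 → s⁻¹ ∈ V := by
    intro s hs hs0
    let f : V →ₗ[C] V :=
      { toFun := fun v => ⟨(v : Q) * s, hmul s hs v v.2⟩
        map_add' := by intro x y; apply Subtype.ext; simp [add_mul]
        map_smul' := by
          intro c x
          apply Subtype.ext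
          show ((c : Q) * x) * s = (c : Q) * (x * s)
          rw [mul_assoc] }
    have hinj : Function.Injective f := by
      intro x y hxy
      apply Subtype.ext
      have : (x : Q) * s = (y : Q) * s := congrArg Subtype.val hxy
      exact mul_right_cancel₀ hs0 this
    have hsurj := LinearMap.injective_iff_surjective.mp hinj
    obtain ⟨w, hw⟩ := hsurj ⟨1, Submodule.subset_span S.one_mem⟩
    have hw' : (w : Q) * s = 1 := congrArg Subtype.val hw
    have : (w : Q) = s⁻¹ := eq_inv_of_mul_eq_one_left hw'
    exact this ▸ w.2
  rw [eq_top_iff]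
  intro q _
  obtain ⟨f, hf, g, hg, hg0, rfl⟩ := hfrac q
  exact hmul f hf _ (hinv g hg hg0)
end

section
/- Let S be a left Ore domain with division ring of fractions Q, and let C ⊆ Q be a division subring such that Q is finite dimensional as a left C-vector space. Then every element of Q can be written as a left C-linear combination of elements of S. -/
/-- Lemma (locali1), second part: let `S` be a left Ore domain with division ring of
fractions `Q`, and `C ⊆ Q` a division subring such that `Q` is finite dimensional as a
left `C`-vector space.  Then every element of `Q` is a left `C`-linear combination of
elements of `S`, i.e. the left `C`-span of `S` is all of `Q`. -/
theorem stmt1 (Q : Type*) [DivisionRing Q] (S C : Subring Q)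
    (hdom : ∀ a b : Q, a ∈ S → b ∈ S → a * b = 0 → a = 0 ∨ b = 0)
    (hfrac : ∀ q : Q, ∃ f ∈ S, ∃ g ∈ S, g ≠ 0 ∧ q = g⁻¹ * f)
    (hC : ∀ c ∈ C, c⁻¹ ∈ C)
    (hfin : Module.Finite C Q) :
    Submodule.span C (S : Set Q) = ⊤ := by
  letI : DivisionRing C := DivisionRing.ofIsUnitOrEqZero (by
    intro a
    rcases eq_or_ne a 0 with h | h
    · exact Or.inr h
    · left
      have ha : (a : Q) ≠ 0 := fun h0 => h (Subtype.ext h0)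
      exact ⟨⟨a, ⟨(a : Q)⁻¹, hC _ a.2⟩, Subtype.ext (mul_inv_cancel₀ ha),
        Subtype.ext (inv_mul_cancel₀ ha)⟩, rfl⟩)
  set M := Submodule.span C (S : Set Q) with hM
  -- right multiplication by an element of S preserves M
  have hmul : ∀ x ∈ M, ∀ s ∈ S, x * s ∈ M := by
    intro x hx s hs
    induction hx using Submodule.span_induction with
    | mem y hy => exact Submodule.subset_span (S.mul_mem hy hs)
    | zero => simp
    | add y z _ _ hy hz => simpa [add_mul] using M.add_mem hy hz
    | smul c y _ hy =>
      have : (c : Q) * y * s = c • (y * s) := by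
        simp [Subring.smul_def, mul_assoc]
      simpa [Subring.smul_def] using this ▸ M.smul_mem c hy
  haveI : FiniteDimensional C Q := hfin
  rw [eq_top_iff]
  rintro q -
  obtain ⟨f, hf, g, hg, hg0, rfl⟩ := hfrac q
  -- the C-linear map M → M given by right multiplication by g
  let φ : M →ₗ[C] M :=
    { toFun := fun x => ⟨(x : Q) * g, hmul _ x.2 _ hg⟩
      map_add' := fun x y => Subtype.ext (add_mul _ _ _)
      map_smul' := fun c x => Subtype.ext (by
        show ((c : Q) * (x : Q)) * g = (c : Q) * ((x : Q) * g)
        rw [mul_assoc]) }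
  have hinj : Function.Injective φ := by
    intro x y hxy
    have : (x : Q) * g = (y : Q) * g := congrArg Subtype.val hxy
    exact Subtype.ext (mul_right_cancel₀ hg0 this)
  have hsurj : Function.Surjective φ := (LinearMap.injective_iff_surjective).mp hinj
  obtain ⟨m, hm⟩ := hsurj ⟨1, Submodule.subset_span S.one_mem⟩
  have hm1 : (m : Q) * g = 1 := congrArg Subtype.val hm
  have hginv : g⁻¹ ∈ M := by
    have hmg : (m : Q) = g⁻¹ := eq_inv_of_mul_eq_one_left hm1
    exact hmg ▸ m.2
  exact hmul _ hginv _ hf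
end

section
/- Let Z be a finitely generated field extension of an algebraically closed field F of characteristic p > 0. Then the intersection over all m ≥ 0 of the subfields Z^{p^m} = {z^{p^m} : z ∈ Z} equals F. -/
open Polynomial

/-- `X i` is prime in a multivariate polynomial ring over a domain. -/
private lemma aux_prime_X {σ : Type*} (R : Type*) [CommRing R] [IsDomain R] (i : σ) :
    Prime (MvPolynomial.X i : MvPolynomial σ R) := by
  classical
  let e := (MvPolynomial.renameEquiv R (Equiv.optionSubtypeNe i).symm).trans
    (MvPolynomial.optionEquivLeft R {b // b ≠ i})
  rw [← MulEquiv.prime_iff e.toMulEquiv]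
  have he : e (MvPolynomial.X i) = Polynomial.X := by
    simp [e, MvPolynomial.optionEquivLeft_X_none, Equiv.optionSubtypeNe_symm_self]
  rw [show e.toMulEquiv (MvPolynomial.X i) = e (MvPolynomial.X i) from rfl, he]
  exact Polynomial.prime_X

/-- An element of an algebraically independent set is not a `p`-th power in the field
it generates. -/
private lemma aux_not_pow (F Z : Type*) [Field F] [Field Z] [Algebra F Z]
    {B : Set Z} (hB : AlgebraicIndependent F ((↑) : B → Z)) {z : Z} (hz : z ∈ B)
    {p : ℕ} (hp : p.Prime) {v : Z} (hv : v ∈ IntermediateField.adjoin F B)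
    (hvp : v ^ p = z) : False := by
  classical
  have hinj : Function.Injective (MvPolynomial.aeval ((↑) : B → Z) : MvPolynomial B F →ₐ[F] Z) :=
    algebraicIndependent_iff_injective_aeval.mp hB
  set i₀ : B := ⟨z, hz⟩ with hi₀
  have hzi : MvPolynomial.aeval (R := F) ((↑) : B → Z) (MvPolynomial.X i₀) = z := by
    simp [MvPolynomial.aeval_X, hi₀]
  have hz0 : z ≠ 0 := by
    intro h0
    have : (MvPolynomial.X i₀ : MvPolynomial B F) = 0 := hinj (by rw [hzi, h0, map_zero])
    exact MvPolynomial.X_ne_zero i₀ this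
  obtain ⟨r, s, hu⟩ := (IntermediateField.mem_adjoin_iff F v).1 hv
  by_cases hs0 : MvPolynomial.aeval ((↑) : B → Z) s = 0
  · rw [hs0, div_zero] at hu
    rw [hu, zero_pow hp.ne_zero] at hvp
    exact hz0 hvp.symm
  · have hkeyZ : MvPolynomial.aeval ((↑) : B → Z) (r ^ p)
        = MvPolynomial.aeval ((↑) : B → Z) (MvPolynomial.X i₀ * s ^ p) := by
      have hv' : v * MvPolynomial.aeval ((↑) : B → Z) s
          = MvPolynomial.aeval ((↑) : B → Z) r := by
        rw [hu, div_mul_cancel₀ _ hs0]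
      rw [map_pow, ← hv', mul_pow, hvp, map_mul, map_pow, hzi]
    have key : r ^ p = MvPolynomial.X i₀ * s ^ p := hinj hkeyZ
    have hs0' : s ≠ 0 := fun h => hs0 (by rw [h, map_zero])
    have hr0 : r ≠ 0 := by
      intro h
      rw [h, zero_pow hp.ne_zero] at key
      have := mul_eq_zero.mp key.symm
      rcases this with h1 | h2
      · exact MvPolynomial.X_ne_zero i₀ h1
      · exact hs0' (pow_eq_zero_iff hp.ne_zero |>.mp h2)
    have hX : Prime (MvPolynomial.X i₀ : MvPolynomial B F) := aux_prime_X F i₀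
    have finr : FiniteMultiplicity (MvPolynomial.X i₀) r :=
      FiniteMultiplicity.of_not_isUnit hX.not_isUnit hr0
    have fins : FiniteMultiplicity (MvPolynomial.X i₀) s :=
      FiniteMultiplicity.of_not_isUnit hX.not_isUnit hs0'
    have finX : FiniteMultiplicity (MvPolynomial.X i₀) (MvPolynomial.X i₀) :=
      FiniteMultiplicity.of_not_isUnit hX.not_isUnit hX.ne_zero
    have hmain := congrArg (emultiplicity (MvPolynomial.X i₀)) key
    rw [emultiplicity_pow hX, emultiplicity_mul hX, emultiplicity_pow hX,
      finX.emultiplicity_self, finr.emultiplicity_eq_multiplicity,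
      fins.emultiplicity_eq_multiplicity] at hmain
    have hnat : p * multiplicity (MvPolynomial.X i₀) r
        = 1 + p * multiplicity (MvPolynomial.X i₀) s := by
      exact_mod_cast hmain
    have hmod := congrArg (· % p) hnat
    simp only [Nat.mul_mod_right, Nat.add_mul_mod_self_left,
      Nat.mod_eq_of_lt hp.one_lt] at hmod
    exact one_ne_zero hmod.symm

/-- Let `Z` be a finitely generated field extension of an algebraically closed field `F` of
characteristic `p > 0`.  Then `⋂ₘ Z^{pᵐ} = F`: the intersection over all `m ≥ 0` of the
subfields of `pᵐ`-th powers of `Z` is exactly (the image of) `F`. -/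
theorem stmt5 (F Z : Type*) [Field F] [Field Z] [Algebra F Z] [IsAlgClosed F]
    (p : ℕ) [Fact p.Prime] [CharP Z p]
    (hfg : ∃ s : Finset Z, IntermediateField.adjoin F (s : Set Z) = ⊤) :
    (⋂ m : ℕ, Set.range fun z : Z => z ^ p ^ m) = Set.range (algebraMap F Z) := by
  have hpP : p.Prime := Fact.out
  apply Set.Subset.antisymm
  · intro z hzmem'
    simp only [Set.mem_iInter, Set.mem_range] at hzmem'
    by_contra hnr
    -- `z` is transcendental over `F` since `F` is algebraically closed
    have htr : Transcendental F z := by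
      intro halg
      obtain ⟨a, ha⟩ := minpoly.mem_range_of_degree_eq_one F z
        (IsAlgClosed.degree_eq_one_of_irreducible F (minpoly.irreducible halg.isIntegral))
      exact hnr ⟨a, ha⟩
    obtain ⟨s, hs⟩ := hfg
    -- find a transcendence basis `B` containing `z`
    have hzind : AlgebraicIndependent F ((↑) : ({z} : Set Z) → Z) := by
      rw [algebraicIndependent_unique_type_iff]
      simpa using htr
    obtain ⟨B, hzB, hmax⟩ := exists_maximal_algebraicIndependent ({z} : Set Z) Set.univ
      (Set.subset_univ _) hzind
    have hBind : AlgebraicIndependent F ((↑) : B → Z) := hmax.prop.1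
    have hBbasis : IsTranscendenceBasis F ((↑) : B → Z) := by
      refine ⟨hBind, fun t ht hBt => ?_⟩
      simp only [Subtype.range_coe_subtype, Set.setOf_mem_eq] at *
      exact hmax.eq_of_le ⟨ht, Set.subset_univ _⟩ hBt
    have hzmem : z ∈ B := hzB rfl
    set L := IntermediateField.adjoin F B with hL
    have halgL : Algebra.IsAlgebraic L Z := by
      have := hBbasis.isAlgebraic_field
      rwa [Subtype.range_coe] at this
    -- `Z` is finite dimensional over `L`
    have htop : IntermediateField.adjoin L (s : Set Z) = ⊤ := by
      rw [eq_top_iff]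
      intro x _
      have h1 : (⊤ : IntermediateField F Z)
          ≤ (IntermediateField.adjoin L (s : Set Z)).restrictScalars F := by
        rw [← hs]
        exact IntermediateField.adjoin_le_iff.mpr (IntermediateField.subset_adjoin L (s : Set Z))
      exact h1 (IntermediateField.mem_top)
    have hfd : FiniteDimensional L Z := by
      have hint : ∀ x ∈ (s : Set Z), IsIntegral L x := fun x _ =>
        (halgL.isAlgebraic x).isIntegral
      haveI hfd1 : FiniteDimensional L (IntermediateField.adjoin L (s : Set Z)) :=
        IntermediateField.finiteDimensional_adjoin hint
      rw [htop] at hfd1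
      exact (IntermediateField.topEquiv (F := L) (E := Z)).toLinearEquiv.finiteDimensional
    haveI : ExpChar L p := ExpChar.prime hpP
    set N := Module.finrank L Z with hN
    obtain ⟨w, hw⟩ := hzmem' N
    have hzL : z ∈ L := IntermediateField.subset_adjoin F B hzmem
    have hwpow : ∃ n : ℕ, w ^ p ^ n ∈ (algebraMap L Z).range :=
      ⟨N, by rw [hw]; exact ⟨⟨z, hzL⟩, rfl⟩⟩
    have h1 : (minpoly L w).natSepDegree = 1 :=
      (minpoly.natSepDegree_eq_one_iff_pow_mem p).2 hwpow
    obtain ⟨n, y, hminpoly⟩ := (minpoly.natSepDegree_eq_one_iff_eq_X_pow_sub_C p).1 h1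
    have hdeg : p ^ n ≤ N := by
      have hle := minpoly.natDegree_le w (A := L)
      rwa [hminpoly, natDegree_X_pow_sub_C] at hle
    have hnN : n < N := by
      have h2 : N < p ^ N := Nat.lt_pow_self (n := N) hpP.one_lt
      have h3 : p ^ n < p ^ N := lt_of_le_of_lt hdeg h2
      exact (Nat.pow_lt_pow_iff_right hpP.one_lt).mp h3
    have hwn : w ^ p ^ n = algebraMap L Z y := by
      have haev := minpoly.aeval L w
      rw [hminpoly] at haev
      simpa [sub_eq_zero] using haev
    -- so `z` is a `p`-th power of an element of `L`, contradiction
    set v : L := y ^ p ^ (N - n - 1) with hv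
    have hvz : (v : Z) ^ p = z := by
      have : (v : Z) = w ^ (p ^ n * p ^ (N - n - 1)) := by
        rw [pow_mul, hwn, hv]
        push_cast [map_pow]
        rfl
      rw [this, ← pow_mul, ← hw]
      congr 1
      rw [← pow_add, ← pow_succ]
      congr 1
      omega
    exact absurd hvz (fun hvz => aux_not_pow F Z hBind hzmem hpP v.2 hvz)
  · rintro x ⟨a, rfl⟩
    simp only [Set.mem_iInter, Set.mem_range]
    intro m
    obtain ⟨b, hb⟩ := IsAlgClosed.exists_pow_nat_eq a (n := p ^ m)
      (pow_pos hpP.pos m)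
    exact ⟨algebraMap F Z b, by rw [← map_pow, hb]⟩
end

section
/- Let H be a finite dimensional Hopf algebra over a field F of characteristic p > dim H, acting inner faithfully on a finitely generated field extension Z of F with F algebraically closed, and suppose the Galois map image B ⊆ Z ⊗ H* is defined over F (i.e., B = Z ⊗ B₀ for a subalgebra B₀ ⊆ H*). Then B₀ = H* and H is cocommutative. -/
set_option maxHeartbeats 1000000
set_option synthInstance.maxHeartbeats 200000

open scoped TensorProduct

section Conv

variable {R : Type*} {A : Type*} [CommSemiring R] [Semiring A] [HopfAlgebra R A]

/-- Convolution product of linear endomorphisms of a Hopf algebra. -/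
noncomputable def convMul (f g : A →ₗ[R] A) : A →ₗ[R] A :=
  LinearMap.mul' R A ∘ₗ TensorProduct.map f g ∘ₗ Coalgebra.comul

/-- Convolution unit. -/
noncomputable def convOne : A →ₗ[R] A :=
  Algebra.linearMap R A ∘ₗ Coalgebra.counit

theorem convMul_convOne (f : A →ₗ[R] A) : convMul f convOne = f := by
  have h1 : TensorProduct.map f (convOne (R := R) (A := A)) =
      (TensorProduct.map f (Algebra.linearMap R A)) ∘ₗ
        ((Coalgebra.counit (R := R) (A := A)).lTensor A) := by
    rw [LinearMap.lTensor, ← TensorProduct.map_comp]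
    rfl
  ext a
  show LinearMap.mul' R A (TensorProduct.map f convOne (Coalgebra.comul a)) = f a
  rw [h1, LinearMap.comp_apply, Coalgebra.lTensor_counit_comul]
  simp

theorem convOne_convMul (f : A →ₗ[R] A) : convMul convOne f = f := by
  have h1 : TensorProduct.map (convOne (R := R) (A := A)) f =
      (TensorProduct.map (Algebra.linearMap R A) f) ∘ₗ
        ((Coalgebra.counit (R := R) (A := A)).rTensor A) := by
    rw [LinearMap.rTensor, ← TensorProduct.map_comp]
    rfl
  ext a
  show LinearMap.mul' R A (TensorProduct.map convOne f (Coalgebra.comul a)) = f a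
  rw [h1, LinearMap.comp_apply, Coalgebra.rTensor_counit_comul]
  simp

theorem convMul_assoc (f g h : A →ₗ[R] A) :
    convMul (convMul f g) h = convMul f (convMul g h) := by
  have hmul : ∀ u : (A ⊗[R] A) ⊗[R] A,
      LinearMap.mul' R A ((LinearMap.mul' R A).rTensor A u) =
      LinearMap.mul' R A ((LinearMap.mul' R A).lTensor A (TensorProduct.assoc R A A A u)) := by
    intro u
    induction u using TensorProduct.induction_on with
    | zero => simp
    | tmul x z =>
      induction x using TensorProduct.induction_on with
      | zero => simp [TensorProduct.zero_tmul]
      | tmul a b => simp [mul_assoc]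
      | add u v hu hv => simp only [TensorProduct.add_tmul, map_add, hu, hv]
    | add u v hu hv => simp [hu, hv]
  have e1 : TensorProduct.map (convMul f g) h =
      (LinearMap.mul' R A).rTensor A ∘ₗ TensorProduct.map (TensorProduct.map f g) h ∘ₗ
        (Coalgebra.comul (R := R) (A := A)).rTensor A := by
    rw [LinearMap.rTensor, LinearMap.rTensor, ← TensorProduct.map_comp, ← TensorProduct.map_comp]
    rfl
  have e2 : TensorProduct.map f (convMul g h) =
      (LinearMap.mul' R A).lTensor A ∘ₗ TensorProduct.map f (TensorProduct.map g h) ∘ₗ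
        (Coalgebra.comul (R := R) (A := A)).lTensor A := by
    rw [LinearMap.lTensor, LinearMap.lTensor, ← TensorProduct.map_comp, ← TensorProduct.map_comp]
    rfl
  ext a
  show LinearMap.mul' R A (TensorProduct.map (convMul f g) h (Coalgebra.comul a)) =
       LinearMap.mul' R A (TensorProduct.map f (convMul g h) (Coalgebra.comul a))
  rw [e1, e2]
  simp only [LinearMap.comp_apply]
  rw [hmul, ← TensorProduct.map_map_assoc, Coalgebra.coassoc_apply]

theorem convMul_antipode_id :
    convMul (HopfAlgebra.antipode (R := R) (A := A)) LinearMap.id = convOne :=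
  HopfAlgebra.mul_antipode_rTensor_comul

theorem convMul_id_antipode :
    convMul LinearMap.id (HopfAlgebra.antipode (R := R) (A := A)) = convOne :=
  HopfAlgebra.mul_antipode_lTensor_comul

end Conv

theorem exists_proj_one (F Z : Type*) [Field F] [Field Z] [Algebra F Z] :
    ∃ φ : Z →ₗ[F] F, φ 1 = 1 := by
  obtain ⟨g, hg⟩ := (Algebra.linearMap F Z).exists_leftInverse_of_injective
    (LinearMap.ker_eq_bot.mpr (algebraMap F Z).injective)
  refine ⟨g, ?_⟩
  have := LinearMap.congr_fun hg 1
  simpa using this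

theorem one_tmul_mem {F Z V : Type*} [Field F] [Field Z] [Algebra F Z]
    [AddCommGroup V] [Module F V] (W : Submodule F V) (x : V)
    (h : (1 : Z) ⊗ₜ[F] x ∈ LinearMap.range
      (TensorProduct.map (LinearMap.id : Z →ₗ[F] Z) W.subtype)) :
    x ∈ W := by
  obtain ⟨φ, hφ⟩ := exists_proj_one F Z
  set E : Z ⊗[F] V →ₗ[F] V :=
    (TensorProduct.lid F V).toLinearMap ∘ₗ TensorProduct.map φ LinearMap.id with hE
  have hEx : E ((1 : Z) ⊗ₜ[F] x) = x := by
    simp [hE, hφ]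
  obtain ⟨t, ht⟩ := h
  have hrange : ∀ t : Z ⊗[F] W,
      E (TensorProduct.map (LinearMap.id : Z →ₗ[F] Z) W.subtype t) ∈ W := by
    intro t
    induction t using TensorProduct.induction_on with
    | zero => simp
    | tmul z w => simpa [hE] using W.smul_mem (φ z) w.2
    | add u v hu hv => rw [map_add, map_add]; exact W.add_mem hu hv
  rw [← hEx, ← ht]
  exact hrange t

theorem one_tmul_inj {F Z V : Type*} [Field F] [Field Z] [Algebra F Z]
    [AddCommGroup V] [Module F V] {x y : V}
    (h : (1 : Z) ⊗ₜ[F] x = (1 : Z) ⊗ₜ[F] y) : x = y := by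
  obtain ⟨φ, hφ⟩ := exists_proj_one F Z
  set E : Z ⊗[F] V →ₗ[F] V :=
    (TensorProduct.lid F V).toLinearMap ∘ₗ TensorProduct.map φ LinearMap.id with hE
  have h1 : E ((1 : Z) ⊗ₜ[F] x) = x := by simp [hE, hφ]
  have h2 : E ((1 : Z) ⊗ₜ[F] y) = y := by simp [hE, hφ]
  rw [← h1, ← h2, h]

/-- A subalgebra `C` of a Hopf algebra `K` over `F` is a Hopf subalgebra if it is stable
under the comultiplication (`comul C ⊆ C ⊗ C`) and the antipode. -/
def IsHopfSubalgebra (F : Type*) [CommRing F] {K : Type*} [Ring K] [HopfAlgebra F K]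
    (C : Subalgebra F K) : Prop :=
  (∀ b ∈ C, Coalgebra.comul (R := F) b ∈
    LinearMap.range (TensorProduct.map (Subalgebra.toSubmodule C).subtype
      (Subalgebra.toSubmodule C).subtype)) ∧
  (∀ b ∈ C, HopfAlgebra.antipode (R := F) b ∈ C)

/-- Lemma (fieldofdef), in dual (comodule) form.  Let `K = H*` be a finite dimensional Hopf
algebra over an algebraically closed field `F` of characteristic `p > dim H`, coacting on a
finitely generated field extension `Z` of `F` via `ρ : Z → Z ⊗ K`, inner faithfully (no
proper Hopf subalgebra `C ⊊ K` satisfies `ρ(Z) ⊆ Z ⊗ C`).  If the image `B` of the Galois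
map is defined over `F`, i.e. `B = Z ⊗ B₀` for a subalgebra `B₀ ⊆ K`, then `B₀ = K` and
`K = H*` is commutative, i.e. `H` is cocommutative. -/
theorem stmt12 (F : Type*) [Field F] [IsAlgClosed F] (Z : Type*) [Field Z] [Algebra F Z]
    (p : ℕ) [Fact p.Prime] [CharP F p]
    (hfg : ∃ s : Finset Z, IntermediateField.adjoin F (s : Set Z) = ⊤)
    (K : Type*) [Ring K] [HopfAlgebra F K] [FiniteDimensional F K]
    (hp : Module.finrank F K < p)
    (ρ : Z →ₐ[F] Z ⊗[F] K)
    (hcounit : ∀ z : Z, (TensorProduct.rid F Z)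
      ((TensorProduct.map LinearMap.id (Coalgebra.counit (R := F))) (ρ z)) = z)
    (hcoassoc : ∀ z : Z,
      (TensorProduct.map ρ.toLinearMap LinearMap.id) (ρ z) =
      (TensorProduct.assoc F Z K K).symm
        ((TensorProduct.map LinearMap.id (Coalgebra.comul (R := F))) (ρ z)))
    (hif : ∀ C : Subalgebra F K, IsHopfSubalgebra F C →
      (∀ z : Z, ρ z ∈ LinearMap.range (TensorProduct.map (LinearMap.id : Z →ₗ[F] Z)
        (Subalgebra.toSubmodule C).subtype)) → C = ⊤)
    (B₀ : Subalgebra F K)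
    (hB : Submodule.span F {w : Z ⊗[F] K | ∃ z z' : Z, w = (z ⊗ₜ[F] (1 : K)) * ρ z'} =
      LinearMap.range (TensorProduct.map (LinearMap.id : Z →ₗ[F] Z)
        (Subalgebra.toSubmodule B₀).subtype)) :
    B₀ = ⊤ ∧ ∀ a b : K, a * b = b * a := by
  classical
  set S : Set (Z ⊗[F] K) := {w | ∃ z z' : Z, w = (z ⊗ₜ[F] (1 : K)) * ρ z'} with hSdef
  -- the generators of B, and membership of ρ(Z) in B
  have hρmem : ∀ z : Z, ρ z ∈ Submodule.span F S := by
    intro z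
    apply Submodule.subset_span
    exact ⟨1, z, by rw [← Algebra.TensorProduct.one_def, one_mul]⟩
  have hρrange : ∀ z : Z, ρ z ∈ LinearMap.range
      (TensorProduct.map (LinearMap.id : Z →ₗ[F] Z) (Subalgebra.toSubmodule B₀).subtype) := by
    intro z; rw [← hB]; exact hρmem z
  -- the target submodule for comul-stability
  set W' : Submodule F (Z ⊗[F] (K ⊗[F] K)) := LinearMap.range
    (TensorProduct.map (LinearMap.id : Z →ₗ[F] Z)
      (TensorProduct.map (Subalgebra.toSubmodule B₀).subtype
        (Subalgebra.toSubmodule B₀).subtype)) with hW'def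
  have key1 : ∀ v ∈ LinearMap.range (TensorProduct.map (LinearMap.id : Z →ₗ[F] Z)
      (Subalgebra.toSubmodule B₀).subtype), ∀ b : K, b ∈ B₀ →
      (TensorProduct.assoc F Z K K) (v ⊗ₜ[F] b) ∈ W' := by
    rintro v ⟨t, rfl⟩ b hb
    induction t using TensorProduct.induction_on with
    | zero => simp
    | tmul z c =>
      exact ⟨z ⊗ₜ[F] ((c : Subalgebra.toSubmodule B₀) ⊗ₜ[F]
        (⟨b, hb⟩ : Subalgebra.toSubmodule B₀)), by simp⟩
    | add u v hu hv =>
      rw [map_add, TensorProduct.add_tmul, map_add]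
      exact add_mem hu hv
  have key2 : ∀ z : Z, TensorProduct.map (LinearMap.id : Z →ₗ[F] Z)
      (Coalgebra.comul (R := F)) (ρ z) ∈ W' := by
    intro z
    have h1 : TensorProduct.map (LinearMap.id : Z →ₗ[F] Z) (Coalgebra.comul (R := F)) (ρ z) =
        (TensorProduct.assoc F Z K K) ((TensorProduct.map ρ.toLinearMap LinearMap.id) (ρ z)) := by
      rw [hcoassoc z]
      simp
    rw [h1]
    obtain ⟨t, ht⟩ := hρrange z
    rw [← ht]
    clear ht
    induction t using TensorProduct.induction_on with
    | zero => simp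
    | tmul z' c =>
      have h2 : (TensorProduct.map ρ.toLinearMap LinearMap.id)
          ((TensorProduct.map (LinearMap.id : Z →ₗ[F] Z)
            (Subalgebra.toSubmodule B₀).subtype) (z' ⊗ₜ[F] c)) = ρ z' ⊗ₜ[F] (c : K) := by
        simp
      rw [h2]
      exact key1 _ (hρrange z') (c : K) c.2
    | add u v hu hv =>
      rw [map_add, map_add, map_add]
      exact add_mem hu hv
  have key3 : ∀ (z : Z), ∀ u ∈ W', (z ⊗ₜ[F] (1 : K ⊗[F] K)) * u ∈ W' := by
    rintro z u ⟨t, rfl⟩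
    induction t using TensorProduct.induction_on with
    | zero => simp
    | tmul a w =>
      refine ⟨(z * a) ⊗ₜ[F] w, ?_⟩
      simp [Algebra.TensorProduct.tmul_mul_tmul]
    | add u v hu hv =>
      rw [map_add, mul_add]
      exact add_mem hu hv
  have hΨ : ∀ x : Z ⊗[F] K,
      (Algebra.TensorProduct.map (AlgHom.id F Z) (Bialgebra.comulAlgHom F K)) x =
      TensorProduct.map (LinearMap.id : Z →ₗ[F] Z) (Coalgebra.comul (R := F)) x := by
    intro x
    induction x using TensorProduct.induction_on with
    | zero => simp
    | tmul z k => simp [Algebra.TensorProduct.map_tmul]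
    | add u v hu hv => simp [hu, hv]
  have claim : ∀ u ∈ Submodule.span F S,
      TensorProduct.map (LinearMap.id : Z →ₗ[F] Z) (Coalgebra.comul (R := F)) u ∈ W' := by
    intro u hu
    induction hu using Submodule.span_induction with
    | mem w hw =>
      obtain ⟨z, z', rfl⟩ := hw
      have h3 : TensorProduct.map (LinearMap.id : Z →ₗ[F] Z) (Coalgebra.comul (R := F))
          ((z ⊗ₜ[F] (1 : K)) * ρ z') = (z ⊗ₜ[F] (1 : K ⊗[F] K)) *
          (TensorProduct.map (LinearMap.id : Z →ₗ[F] Z) (Coalgebra.comul (R := F)) (ρ z')) := by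
        rw [← hΨ, ← hΨ, map_mul]
        congr 1
        simp [Algebra.TensorProduct.map_tmul]
      rw [h3]
      exact key3 z _ (key2 z')
    | zero => simp
    | add x y hx hy ihx ihy => rw [map_add]; exact add_mem ihx ihy
    | smul a x hx ih => rw [map_smul]; exact Submodule.smul_mem _ _ ih
  -- comul stability of B₀
  have hcomul : ∀ b ∈ B₀, Coalgebra.comul (R := F) b ∈
      LinearMap.range (TensorProduct.map (Subalgebra.toSubmodule B₀).subtype
        (Subalgebra.toSubmodule B₀).subtype) := by
    intro b hb
    have h1b : (1 : Z) ⊗ₜ[F] b ∈ Submodule.span F S := by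
      rw [hB]
      exact ⟨(1 : Z) ⊗ₜ[F] (⟨b, hb⟩ : Subalgebra.toSubmodule B₀), by simp⟩
    have h2 := claim _ h1b
    have h4 : TensorProduct.map (LinearMap.id : Z →ₗ[F] Z) (Coalgebra.comul (R := F))
        ((1 : Z) ⊗ₜ[F] b) = (1 : Z) ⊗ₜ[F] (Coalgebra.comul (R := F) b) := by
      simp
    rw [h4] at h2
    set m2 := TensorProduct.map (Subalgebra.toSubmodule B₀).subtype
      (Subalgebra.toSubmodule B₀).subtype with hm2
    apply one_tmul_mem (F := F) (Z := Z) (LinearMap.range m2)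
    obtain ⟨t, ht⟩ := h2
    refine ⟨TensorProduct.map LinearMap.id m2.rangeRestrict t, ?_⟩
    rw [← ht, ← LinearMap.comp_apply, ← TensorProduct.map_comp]
    congr 1
  -- antipode stability of B₀
  have hanti : ∀ b ∈ B₀, HopfAlgebra.antipode (R := F) b ∈ B₀ := by
    let A₀ : Submodule F (K →ₗ[F] K) :=
      { carrier := {f | ∀ c ∈ B₀, f c ∈ B₀}
        add_mem' := fun hf hg c hc => B₀.add_mem (hf c hc) (hg c hc)
        zero_mem' := fun c _ => by simpa using B₀.zero_mem
        smul_mem' := fun a f hf c hc => by simpa using B₀.smul_mem (hf c hc) a }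
    have hconv : ∀ f g : K →ₗ[F] K, f ∈ A₀ → g ∈ A₀ → convMul f g ∈ A₀ := by
      intro f g hf hg c hc
      obtain ⟨t, ht⟩ := hcomul c hc
      show LinearMap.mul' F K (TensorProduct.map f g (Coalgebra.comul (R := F) c)) ∈ B₀
      rw [← ht]
      clear ht
      induction t using TensorProduct.induction_on with
      | zero => simpa using B₀.zero_mem
      | tmul x y =>
        have : LinearMap.mul' F K (TensorProduct.map f g
            ((TensorProduct.map (Subalgebra.toSubmodule B₀).subtype
              (Subalgebra.toSubmodule B₀).subtype) (x ⊗ₜ[F] y))) = f (x : K) * g (y : K) := by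
          simp
        rw [this]
        exact B₀.mul_mem (hf _ x.2) (hg _ y.2)
      | add u v hu hv =>
        rw [map_add, map_add, map_add]
        exact B₀.add_mem hu hv
    have hone : convOne (R := F) (A := K) ∈ A₀ := by
      intro c _
      show Algebra.linearMap F K (Coalgebra.counit (R := F) c) ∈ B₀
      exact B₀.algebraMap_mem _
    have hid : (LinearMap.id : K →ₗ[F] K) ∈ A₀ := fun c hc => hc
    let L : A₀ →ₗ[F] A₀ :=
      { toFun := fun f => ⟨convMul LinearMap.id f.1, hconv _ _ hid f.2⟩
        map_add' := fun f g => Subtype.ext (by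
          ext c
          simp [convMul, TensorProduct.map_add_right])
        map_smul' := fun a f => Subtype.ext (by
          ext c
          simp [convMul, TensorProduct.map_smul_right]) }
    have hcancel : ∀ u v : K →ₗ[F] K, convMul LinearMap.id u = convMul LinearMap.id v → u = v := by
      intro u v huv
      have h1 : convMul (convMul (HopfAlgebra.antipode (R := F)) LinearMap.id) u
          = convMul (convMul (HopfAlgebra.antipode (R := F)) LinearMap.id) v := by
        rw [convMul_assoc, convMul_assoc, huv]
      rwa [convMul_antipode_id, convOne_convMul, convOne_convMul] at h1
    have hLinj : Function.Injective L := by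
      intro f g hfg
      exact Subtype.ext (hcancel _ _ (congrArg Subtype.val hfg))
    haveI : FiniteDimensional F (K →ₗ[F] K) := inferInstance
    haveI : FiniteDimensional F A₀ := FiniteDimensional.finiteDimensional_submodule A₀
    have hLsurj : Function.Surjective L := by
      have hh := @LinearMap.surjective_of_injective F A₀ _ _ _ _ L
      exact hh hLinj
    obtain ⟨g, hg⟩ := hLsurj ⟨convOne, hone⟩
    have hgid : convMul LinearMap.id g.1 = convOne := congrArg Subtype.val hg
    have hSg : HopfAlgebra.antipode (R := F) (A := K) = g.1 := by
      have h5 : convMul (HopfAlgebra.antipode (R := F) (A := K)) (convMul LinearMap.id g.1)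
          = convMul (HopfAlgebra.antipode (R := F) (A := K)) convOne := by rw [hgid]
      rw [← convMul_assoc, convMul_antipode_id, convOne_convMul, convMul_convOne] at h5
      exact h5.symm
    intro b hb
    rw [hSg]
    exact g.2 b hb
  -- inner faithfulness
  have htop : B₀ = ⊤ := hif B₀ ⟨hcomul, hanti⟩ hρrange
  refine ⟨htop, ?_⟩
  -- commutativity
  have hcentral : ∀ (z : Z) (x : Z ⊗[F] K),
      (z ⊗ₜ[F] (1 : K)) * x = x * (z ⊗ₜ[F] (1 : K)) := by
    intro z x
    induction x using TensorProduct.induction_on with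
    | zero => simp
    | tmul a k => simp [Algebra.TensorProduct.tmul_mul_tmul, mul_comm z a]
    | add u v hu hv => rw [mul_add, add_mul, hu, hv]
  have hgenmul : ∀ (a b c d : Z), ((a ⊗ₜ[F] (1 : K)) * ρ c) * ((b ⊗ₜ[F] (1 : K)) * ρ d)
      = ((a * b) ⊗ₜ[F] (1 : K)) * ρ (c * d) := by
    intro a b c d
    calc ((a ⊗ₜ[F] (1 : K)) * ρ c) * ((b ⊗ₜ[F] (1 : K)) * ρ d)
        = (a ⊗ₜ[F] (1 : K)) * ((ρ c * (b ⊗ₜ[F] (1 : K))) * ρ d) := by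
          rw [mul_assoc, mul_assoc]
      _ = (a ⊗ₜ[F] (1 : K)) * (((b ⊗ₜ[F] (1 : K)) * ρ c) * ρ d) := by
          rw [← hcentral]
      _ = ((a ⊗ₜ[F] (1 : K)) * (b ⊗ₜ[F] (1 : K))) * (ρ c * ρ d) := by
          rw [mul_assoc, mul_assoc]
      _ = ((a * b) ⊗ₜ[F] (1 : K)) * ρ (c * d) := by
          rw [Algebra.TensorProduct.tmul_mul_tmul, one_mul, map_mul]
  have hgen : ∀ x ∈ S, ∀ y ∈ S, x * y = y * x := by
    rintro _ ⟨z₁, z₁', rfl⟩ _ ⟨z₂, z₂', rfl⟩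
    rw [hgenmul, hgenmul, mul_comm z₁ z₂, mul_comm z₁' z₂']
  have hcomm : ∀ x ∈ Submodule.span F S, ∀ y ∈ Submodule.span F S, x * y = y * x := by
    intro x hx y hy
    induction hx, hy using Submodule.span_induction₂ with
    | mem_mem u v hu hv => exact hgen u hu v hv
    | zero_left y hy => simp
    | zero_right x hx => simp
    | add_left x y z hx hy hz ihx ihy => rw [add_mul, mul_add, ihx, ihy]
    | add_right x y z hx hy hz ihx ihy => rw [mul_add, add_mul, ihx, ihy]
    | smul_left r x y hx hy ih => rw [smul_mul_assoc, mul_smul_comm, ih]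
    | smul_right r x y hx hy ih => rw [smul_mul_assoc, mul_smul_comm, ih]
  intro a b
  have hmemtop : ∀ x : K, x ∈ Subalgebra.toSubmodule B₀ := by
    intro x
    rw [htop]
    exact trivial
  have hmem : ∀ x : K, (1 : Z) ⊗ₜ[F] x ∈ Submodule.span F S := by
    intro x
    rw [hB]
    exact ⟨(1 : Z) ⊗ₜ[F] (⟨x, hmemtop x⟩ : Subalgebra.toSubmodule B₀), by simp⟩
  have h6 := hcomm _ (hmem a) _ (hmem b)
  rw [Algebra.TensorProduct.tmul_mul_tmul, Algebra.TensorProduct.tmul_mul_tmul, one_mul] at h6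
  exact one_tmul_inj (F := F) (Z := Z) h6
end
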